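/- Sample version of the threshold theorem: let A^(1),…,A^(N) be i.i.d. samples from the inhomogeneous Erdős–Rényi measure with edge-probability matrix P having no entry equal to 1/2. Then for every δ ∈ (0,1) there exists N_δ such that for all N ≥ N_δ, with probability at least 1 − δ, every minimizer B of B ↦ Σ_{k=1}^N d_H(A^(k),B) satisfies b_ij = 1 iff p_ij > 1/2 for all i<j. -/

import Mathlib

open Finset
open scoped Classical

/-- The set of pairs (i,j) with i < j. -/
def pairs (n : ℕ) : Finset (Fin n × Fin n) :=
  Finset.univ.filter (fun q => q.1 < q.2)

/-- The set `S` of adjacency matrices: symmetric Bool matrices with zero (false) diagonal. -/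
noncomputable def adjS (n : ℕ) : Finset (Matrix (Fin n) (Fin n) Bool) :=
  Finset.univ.filter (fun A => (∀ i j, A i j = A j i) ∧ ∀ i, A i i = false)

/-- The real-valued 0/1 entry of an adjacency matrix. -/
noncomputable def val {n : ℕ} (A : Matrix (Fin n) (Fin n) Bool) (i j : Fin n) : ℝ :=
  if A i j then 1 else 0

/-- The Hamming distance between two graphs. -/
noncomputable def dH {n : ℕ} (A B : Matrix (Fin n) (Fin n) Bool) : ℝ :=
  ∑ q ∈ pairs n, |val A q.1 q.2 - val B q.1 q.2|

/-- The inhomogeneous Erdős–Rényi probability of an adjacency matrix: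
`∏_{i<j} p_ij^{a_ij} (1-p_ij)^{1-a_ij}`. -/
noncomputable def erPr {n : ℕ} (p : Fin n → Fin n → ℝ) (A : Matrix (Fin n) (Fin n) Bool) : ℝ :=
  ∏ q ∈ pairs n, if A q.1 q.2 then p q.1 q.2 else 1 - p q.1 q.2

/-- The edge set of a graph: pairs (i,j), i<j, with b_ij = 1. -/
def edges {n : ℕ} (B : Matrix (Fin n) (Fin n) Bool) : Finset (Fin n × Fin n) :=
  (pairs n).filter (fun q => B q.1 q.2 = true)


noncomputable def w (θ : ℝ) (b : Bool) : ℝ := if b then θ else 1 - θ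

noncomputable def sumv {N : ℕ} (x : Fin N → Bool) : ℝ := ∑ k, if x k then (1:ℝ) else 0

noncomputable def mu {N : ℕ} (θ : ℝ) (x : Fin N → Bool) : ℝ := ∏ k, w θ (x k)

lemma w_nonneg {θ : ℝ} (h0 : 0 ≤ θ) (h1 : θ ≤ 1) (b : Bool) : 0 ≤ w θ b := by
  cases b <;> simp [w] <;> linarith

lemma mu_nonneg {N : ℕ} {θ : ℝ} (h0 : 0 ≤ θ) (h1 : θ ≤ 1) (x : Fin N → Bool) : 0 ≤ mu θ x :=
  Finset.prod_nonneg fun k _ => w_nonneg h0 h1 _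

lemma sum_w (θ : ℝ) : ∑ b : Bool, w θ b = 1 := by simp [w]

lemma sum_mu (N : ℕ) (θ : ℝ) : ∑ x : Fin N → Bool, mu θ x = 1 := by
  rw [show ∑ x : Fin N → Bool, mu θ x = ∑ x : Fin N → Bool, ∏ k, w θ (x k) from rfl,
    ← Fintype.prod_sum]
  simp only [sum_w]
  simp

lemma variance_mu (N : ℕ) (θ : ℝ) :
    ∑ x : Fin N → Bool, mu θ x * (sumv x - N * θ)^2 = N * (θ * (1 - θ)) := by
  have hY : ∀ x : Fin N → Bool, sumv x - N * θ = ∑ k, ((if x k then (1:ℝ) else 0) - θ) := by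
    intro x; simp [sumv, Finset.sum_sub_distrib]
  have key : ∀ x : Fin N → Bool, mu θ x * (sumv x - N * θ)^2
      = ∑ k : Fin N, ∑ l : Fin N, ∏ m : Fin N,
        (w θ (x m) * (if m = k then ((if x m then (1:ℝ) else 0) - θ) else 1)
          * (if m = l then ((if x m then (1:ℝ) else 0) - θ) else 1)) := by
    intro x
    rw [hY, sq, Finset.sum_mul_sum, Finset.mul_sum]
    congr 1; ext k
    rw [Finset.mul_sum]
    congr 1; ext l
    rw [Finset.prod_mul_distrib, Finset.prod_mul_distrib]
    simp [mu, Finset.prod_ite_eq', mul_assoc]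
  calc ∑ x : Fin N → Bool, mu θ x * (sumv x - N * θ)^2
      = ∑ x : Fin N → Bool, ∑ k : Fin N, ∑ l : Fin N, ∏ m : Fin N,
        (w θ (x m) * (if m = k then ((if x m then (1:ℝ) else 0) - θ) else 1)
          * (if m = l then ((if x m then (1:ℝ) else 0) - θ) else 1)) :=
        Finset.sum_congr rfl fun x _ => key x
    _ = ∑ k : Fin N, ∑ l : Fin N, ∑ x : Fin N → Bool, ∏ m : Fin N,
        (w θ (x m) * (if m = k then ((if x m then (1:ℝ) else 0) - θ) else 1)
          * (if m = l then ((if x m then (1:ℝ) else 0) - θ) else 1)) := by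
        rw [Finset.sum_comm]
        refine Finset.sum_congr rfl fun k _ => ?_
        rw [Finset.sum_comm]
    _ = ∑ k : Fin N, ∑ l : Fin N, ∏ m : Fin N, ∑ b : Bool,
        (w θ b * (if m = k then ((if b then (1:ℝ) else 0) - θ) else 1)
          * (if m = l then ((if b then (1:ℝ) else 0) - θ) else 1)) := by
        refine Finset.sum_congr rfl fun k _ => Finset.sum_congr rfl fun l _ => ?_
        rw [Fintype.prod_sum]
    _ = ∑ k : Fin N, ∑ l : Fin N, if k = l then θ * (1 - θ) else 0 := by
        refine Finset.sum_congr rfl fun k _ => Finset.sum_congr rfl fun l _ => ?_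
        by_cases hkl : k = l
        · subst hkl
          rw [if_pos rfl]
          rw [Finset.prod_eq_single k]
          · simp [w]; ring
          · intro m _ hm
            simp [hm, w]
          · simp
        · rw [if_neg hkl]
          apply Finset.prod_eq_zero (Finset.mem_univ k)
          simp [hkl, w]; ring
    _ = ↑N * (θ * (1 - θ)) := by simp [Finset.sum_ite_eq]

lemma cheb {N : ℕ} {θ : ℝ} (h0 : 0 ≤ θ) (h1 : θ ≤ 1) {c : ℝ} (hc : 0 < c)
    (E : Finset (Fin N → Bool)) (hE : ∀ x ∈ E, c ≤ |sumv x - N * θ|) :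
    ∑ x ∈ E, mu θ x ≤ N * (θ * (1 - θ)) / c ^ 2 := by
  rw [← variance_mu N θ]
  have h1' : ∑ x ∈ E, mu θ x ≤ ∑ x ∈ E, mu θ x * (sumv x - N * θ)^2 / c^2 := by
    refine Finset.sum_le_sum fun x hx => ?_
    have hmu := mu_nonneg h0 h1 x
    have := hE x hx
    have hsq : c^2 ≤ (sumv x - N * θ)^2 := by
      have := abs_nonneg (sumv x - N * θ)
      nlinarith [sq_abs (sumv x - N * θ)]
    rw [le_div_iff₀ (by positivity)]
    nlinarith
  refine h1'.trans ?_
  rw [← Finset.sum_div]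
  gcongr
  · exact fun x _ _ => mul_nonneg (mu_nonneg h0 h1 x) (sq_nonneg _)
  · exact Finset.subset_univ E

noncomputable def goodcol (N : ℕ) (θ : ℝ) (x : Fin N → Bool) : Prop :=
  if 1/2 < θ then (N:ℝ) < 2 * sumv x else 2 * sumv x < (N:ℝ)

def badcolP (N : ℕ) (θ : ℝ) (x : Fin N → Bool) : Prop := ¬ goodcol N θ x

lemma badcol_bound {N : ℕ} (hN : 1 ≤ N) {θ : ℝ} (h0 : 0 ≤ θ) (h1 : θ ≤ 1) (hne : θ ≠ 1/2) :
    ∑ x ∈ Finset.univ.filter (badcolP N θ), mu θ x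
      ≤ 1 / (4 * N * (θ - 1/2)^2) := by
  have hε : 0 < |θ - 1/2| := by
    rw [abs_pos]; intro h; apply hne; linarith [sub_eq_zero.mp h]
  have hNpos : (0:ℝ) < N := by exact_mod_cast hN
  have hc : (0:ℝ) < N * |θ - 1/2| := by positivity
  have hE : ∀ x ∈ Finset.univ.filter (badcolP N θ),
      N * |θ - 1/2| ≤ |sumv x - N * θ| := by
    intro x hx
    rw [Finset.mem_filter] at hx
    have hb : ¬ goodcol N θ x := hx.2
    by_cases hθ : 1/2 < θ
    · rw [goodcol, if_pos hθ] at hb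
      push_neg at hb
      rw [abs_of_pos (by linarith), abs_sub_comm, abs_of_nonneg (by nlinarith)]
      nlinarith
    · rw [goodcol, if_neg hθ] at hb
      push_neg at hb
      have hθ' : θ < 1/2 := lt_of_le_of_ne (not_lt.mp hθ) hne
      rw [abs_of_neg (by linarith), abs_of_nonneg (by nlinarith)]
      nlinarith
  refine (cheb h0 h1 hc _ hE).trans ?_
  have hd : θ - 1/2 ≠ 0 := sub_ne_zero.mpr hne
  rw [mul_pow, sq_abs]
  rw [div_le_div_iff₀ (by positivity) (by positivity)]
  nlinarith [sq_nonneg ((N:ℝ)*(θ-1/2)*(2*θ-1))]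

lemma marg {I α : Type*} [Fintype I] [DecidableEq I] [Fintype α] [DecidableEq α]
    (g : I → α → ℝ) (h1 : ∀ i, ∑ a : α, g i a = 1) (i₀ : I) (R : α → Prop) :
    ∑ y ∈ Finset.univ.filter (fun y : I → α => R (y i₀)), ∏ i, g i (y i)
      = ∑ a ∈ Finset.univ.filter R, g i₀ a := by
  classical
  set G : I → α → ℝ := fun i a => if i = i₀ then (if R a then g i a else 0) else g i a with hG
  rw [Finset.sum_filter]
  have step : ∀ y : I → α, (if R (y i₀) then ∏ i, g i (y i) else 0)
      = ∏ i, G i (y i) := by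
    intro y
    simp only [hG]
    by_cases hR : R (y i₀)
    · rw [if_pos hR]
      refine Finset.prod_congr rfl fun i _ => ?_
      by_cases hi : i = i₀
      · subst hi; simp [hR]
      · simp [hi]
    · rw [if_neg hR]
      symm
      apply Finset.prod_eq_zero (Finset.mem_univ i₀)
      simp [hR]
  rw [Finset.sum_congr rfl fun y _ => step y, ← Fintype.prod_sum G]
  rw [Finset.prod_eq_single i₀]
  · simp [hG, Finset.sum_filter]
  · intro i _ hi
    simp [hG, hi, h1 i]
  · simp

lemma mem_pairs {n : ℕ} {q : Fin n × Fin n} : q ∈ pairs n ↔ q.1 < q.2 := by simp [pairs]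

lemma mem_adjS {n : ℕ} {A : Matrix (Fin n) (Fin n) Bool} :
    A ∈ adjS n ↔ (∀ i j, A i j = A j i) ∧ ∀ i, A i i = false := by simp [adjS]

def allAdj {n N : ℕ} (ω : Fin N → Matrix (Fin n) (Fin n) Bool) : Prop := ∀ k, ω k ∈ adjS n

def col {n N : ℕ} (ω : Fin N → Matrix (Fin n) (Fin n) Bool)
    (t : {q : Fin n × Fin n // q ∈ pairs n}) : Fin N → Bool := fun k => ω k t.1.1 t.1.2

def matofCol {n N : ℕ} (y : {q : Fin n × Fin n // q ∈ pairs n} → Fin N → Bool)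
    (k : Fin N) : Matrix (Fin n) (Fin n) Bool :=
  fun i j => if h : i < j then y ⟨(i,j), mem_pairs.mpr h⟩ k
    else if h2 : j < i then y ⟨(j,i), mem_pairs.mpr h2⟩ k else false

lemma matofCol_allAdj {n N : ℕ} (y : {q : Fin n × Fin n // q ∈ pairs n} → Fin N → Bool) :
    allAdj (matofCol y) := by
  intro k
  rw [mem_adjS]
  constructor
  · intro i j
    rcases lt_trichotomy i j with h | h | h
    · simp [matofCol, h, not_lt.mpr h.le, h.not_gt]
    · subst h; rfl
    · simp [matofCol, h, not_lt.mpr h.le, h.not_gt]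
  · intro i
    simp [matofCol]

lemma col_matofCol {n N : ℕ} (y : {q : Fin n × Fin n // q ∈ pairs n} → Fin N → Bool) :
    col (matofCol y) = y := by
  funext t k
  obtain ⟨⟨i, j⟩, ht⟩ := t
  have hij : i < j := mem_pairs.mp ht
  simp [col, matofCol, hij]

lemma matofCol_col {n N : ℕ} (ω : Fin N → Matrix (Fin n) (Fin n) Bool) (hω : allAdj ω) :
    matofCol (col ω) = ω := by
  funext k i j
  obtain ⟨hsymm, hdg⟩ := mem_adjS.mp (hω k)
  rcases lt_trichotomy i j with h | h | h
  · simp [matofCol, col, h]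
  · subst h
    simp [matofCol, col, hdg i]
  · simp [matofCol, col, h, not_lt.mpr h.le, hsymm i j]

lemma weight_eq {n N : ℕ} (p : Fin n → Fin n → ℝ) (ω : Fin N → Matrix (Fin n) (Fin n) Bool) :
    ∏ k, erPr p (ω k) = ∏ t : {q : Fin n × Fin n // q ∈ pairs n},
      mu (p t.1.1 t.1.2) (col ω t) := by
  have h1 : ∀ k, erPr p (ω k) = ∏ t : {q : Fin n × Fin n // q ∈ pairs n},
      w (p t.1.1 t.1.2) (ω k t.1.1 t.1.2) := by
    intro k
    rw [erPr, ← Finset.prod_coe_sort]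
    rfl
  rw [Finset.prod_congr rfl fun k _ => h1 k, Finset.prod_comm]
  rfl

lemma transfer {n N : ℕ} (p : Fin n → Fin n → ℝ)
    (P1 : (Fin N → Matrix (Fin n) (Fin n) Bool) → Prop)
    (P2 : ({q : Fin n × Fin n // q ∈ pairs n} → Fin N → Bool) → Prop)
    (hcorr : ∀ ω, allAdj ω → (P1 ω ↔ P2 (col ω))) :
    ∑ ω ∈ Finset.univ.filter (fun ω => allAdj ω ∧ P1 ω), ∏ k, erPr p (ω k)
      = ∑ y ∈ Finset.univ.filter P2,
          ∏ t : {q : Fin n × Fin n // q ∈ pairs n}, mu (p t.1.1 t.1.2) (y t) := by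
  classical
  refine Finset.sum_nbij' (fun ω => col ω) (fun y => matofCol y) ?_ ?_ ?_ ?_ ?_
  · intro ω hω
    rw [Finset.mem_filter] at *
    exact ⟨Finset.mem_univ _, (hcorr ω hω.2.1).mp hω.2.2⟩
  · intro y hy
    rw [Finset.mem_filter] at *
    refine ⟨Finset.mem_univ _, matofCol_allAdj y, ?_⟩
    rw [hcorr _ (matofCol_allAdj y), col_matofCol]
    exact hy.2
  · intro ω hω
    rw [Finset.mem_filter] at hω
    exact matofCol_col ω hω.2.1
  · intro y _
    exact col_matofCol y
  · intro ω _
    exact weight_eq p ω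

lemma union_bound {γ I : Type*} [Fintype γ] [Fintype I] (f : γ → ℝ) (hf : ∀ x, 0 ≤ f x)
    (Q : I → γ → Prop) :
    ∑ x ∈ Finset.univ.filter (fun x => ∃ i, Q i x), f x
      ≤ ∑ i : I, ∑ x ∈ Finset.univ.filter (Q i), f x := by
  classical
  rw [Finset.sum_filter]
  have : ∀ i : I, ∑ x ∈ Finset.univ.filter (Q i), f x
      = ∑ x : γ, if Q i x then f x else 0 := fun i => Finset.sum_filter _ _
  rw [Finset.sum_congr rfl fun i _ => this i, Finset.sum_comm]
  refine Finset.sum_le_sum fun x _ => ?_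
  by_cases hx : ∃ i, Q i x
  · obtain ⟨i₀, hi₀⟩ := hx
    rw [if_pos ⟨i₀, hi₀⟩]
    have := Finset.single_le_sum (f := fun i : I => if Q i x then f x else 0)
      (fun i _ => by by_cases h : Q i x <;> simp [h, hf x]) (Finset.mem_univ i₀)
    simpa [hi₀] using this
  · rw [if_neg hx]
    exact Finset.sum_nonneg fun i _ => by by_cases h : Q i x <;> simp [h, hf x]

lemma costf_true {n N : ℕ} (ω : Fin N → Matrix (Fin n) (Fin n) Bool) (i j : Fin n) :
    ∑ k, |val (ω k) i j - (1:ℝ)| = N - sumv (fun k => ω k i j) := by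
  rw [sumv, show ((N:ℝ)) = ∑ k : Fin N, (1:ℝ) by simp, ← Finset.sum_sub_distrib]
  refine Finset.sum_congr rfl fun k _ => ?_
  by_cases h : ω k i j <;> simp [_root_.val, h]

lemma costf_false {n N : ℕ} (ω : Fin N → Matrix (Fin n) (Fin n) Bool) (i j : Fin n) :
    ∑ k, |val (ω k) i j - (0:ℝ)| = sumv (fun k => ω k i j) := by
  rw [sumv]
  refine Finset.sum_congr rfl fun k _ => ?_
  by_cases h : ω k i j <;> simp [_root_.val, h]

lemma sum_dH_eq {n N : ℕ} (ω : Fin N → Matrix (Fin n) (Fin n) Bool)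
    (B : Matrix (Fin n) (Fin n) Bool) :
    ∑ k, dH (ω k) B = ∑ q ∈ pairs n, ∑ k,
      |val (ω k) q.1 q.2 - (if B q.1 q.2 then (1:ℝ) else 0)| := by
  rw [show (∑ k, dH (ω k) B) = ∑ k, ∑ q ∈ pairs n,
      |val (ω k) q.1 q.2 - val B q.1 q.2| from rfl, Finset.sum_comm]
  rfl

lemma main_comb {n N : ℕ} (p : Fin n → Fin n → ℝ)
    (ω : Fin N → Matrix (Fin n) (Fin n) Bool) (hω : allAdj ω)
    (hg : ∀ q ∈ pairs n, goodcol N (p q.1 q.2) (fun k => ω k q.1 q.2)) :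
    ∀ B ∈ adjS n,
      (∀ C ∈ adjS n, ∑ k, dH (ω k) B ≤ ∑ k, dH (ω k) C) →
        ∀ q ∈ pairs n, (B q.1 q.2 = true ↔ 1 / 2 < p q.1 q.2) := by
  intro B hB hmin q hq
  obtain ⟨i, j⟩ := q
  have hij : i < j := mem_pairs.mp hq
  set bstar : Bool := decide (1/2 < p i j) with hbstar
  set C : Matrix (Fin n) (Fin n) Bool :=
    fun a b => if (a = i ∧ b = j) ∨ (a = j ∧ b = i) then bstar else B a b with hCdef
  have hBS := mem_adjS.mp hB
  have hC : C ∈ adjS n := by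
    rw [mem_adjS]
    constructor
    · intro a b
      simp only [hCdef]
      have hPQ : ((a = i ∧ b = j) ∨ (a = j ∧ b = i)) ↔ ((b = i ∧ a = j) ∨ (b = j ∧ a = i)) := by
        tauto
      by_cases h : (a = i ∧ b = j) ∨ (a = j ∧ b = i)
      · rw [if_pos h, if_pos (hPQ.mp h)]
      · rw [if_neg h, if_neg (fun hc => h (hPQ.mpr hc)), hBS.1 a b]
    · intro a
      simp only [hCdef]
      rw [if_neg, hBS.2 a]
      rintro (⟨h1, h2⟩ | ⟨h1, h2⟩) <;> exact absurd (h1 ▸ h2 ▸ rfl : i = j) hij.ne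
  have hCq : C i j = bstar := by simp [hCdef]
  have hCother : ∀ q' ∈ pairs n, q' ≠ (i, j) → C q'.1 q'.2 = B q'.1 q'.2 := by
    intro q' hq' hne
    have h12 : q'.1 < q'.2 := mem_pairs.mp hq'
    simp only [hCdef]
    rw [if_neg]
    rintro (⟨h1, h2⟩ | ⟨h1, h2⟩)
    · exact hne (Prod.ext h1 h2)
    · rw [h1, h2] at h12; exact absurd h12 hij.asymm
  -- reduce minimality to the single pair (i,j)
  have hmin' := hmin C hC
  rw [sum_dH_eq, sum_dH_eq] at hmin'
  have hqmem : ((i, j) : Fin n × Fin n) ∈ pairs n := hq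
  rw [← Finset.sum_erase_add _ _ hqmem, ← Finset.sum_erase_add _ _ hqmem] at hmin'
  have herase : ∑ q' ∈ (pairs n).erase (i, j), ∑ k,
        |val (ω k) q'.1 q'.2 - (if B q'.1 q'.2 then (1:ℝ) else 0)|
      = ∑ q' ∈ (pairs n).erase (i, j), ∑ k,
        |val (ω k) q'.1 q'.2 - (if C q'.1 q'.2 then (1:ℝ) else 0)| := by
    refine Finset.sum_congr rfl fun q' hq' => ?_
    rw [Finset.mem_erase] at hq'
    rw [hCother q' hq'.2 hq'.1]
  rw [herase] at hmin'
  have hkey : ∑ k, |val (ω k) i j - (if B i j then (1:ℝ) else 0)|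
      ≤ ∑ k, |val (ω k) i j - (if C i j then (1:ℝ) else 0)| := by linarith
  have hgood : goodcol N (p i j) (fun k => ω k i j) := hg (i, j) hq
  by_cases hpij : 1/2 < p i j
  · refine iff_of_true ?_ hpij
    have hb : bstar = true := decide_eq_true hpij
    by_contra hBij
    have hBf : B i j = false := by revert hBij; cases B i j <;> simp
    rw [hBf, hCq, hb, if_neg (by simp), if_pos rfl, costf_true, costf_false] at hkey
    rw [goodcol, if_pos hpij] at hgood
    linarith
  · refine iff_of_false ?_ hpij
    have hb : bstar = false := decide_eq_false hpij
    intro hBij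
    rw [hBij, hCq, hb, if_pos rfl, if_neg (by simp), costf_true, costf_false] at hkey
    rw [goodcol, if_neg hpij] at hgood
    linarith

def Pgood {n : ℕ} (p : Fin n → Fin n → ℝ) (N : ℕ)
    (y : {q : Fin n × Fin n // q ∈ pairs n} → Fin N → Bool) : Prop :=
  ∀ t, goodcol N (p t.1.1 t.1.2) (y t)

lemma erPr_nonneg {n : ℕ} (p : Fin n → Fin n → ℝ) (hp : ∀ i j, 0 ≤ p i j ∧ p i j ≤ 1)
    (A : Matrix (Fin n) (Fin n) Bool) : 0 ≤ erPr p A := by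
  refine Finset.prod_nonneg fun q _ => ?_
  by_cases h : A q.1 q.2 <;> simp [h]
  · exact (hp q.1 q.2).1
  · linarith [(hp q.1 q.2).2]


set_option maxHeartbeats 2000000 in
theorem stmt18 (n : ℕ) (p : Fin n → Fin n → ℝ)
    (hp : ∀ i j, 0 ≤ p i j ∧ p i j ≤ 1) (hsym : ∀ i j, p i j = p j i)
    (hdiag : ∀ i, p i i = 0)
    (hhalf : ∀ q ∈ pairs n, p q.1 q.2 ≠ 1 / 2) :
    ∀ δ ∈ Set.Ioo (0 : ℝ) 1, ∃ N₀ : ℕ, ∀ N ≥ N₀,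
      1 - δ ≤
        ∑ ω ∈ (Finset.univ : Finset (Fin N → Matrix (Fin n) (Fin n) Bool)).filter
            (fun ω => (∀ k, ω k ∈ adjS n) ∧
              ∀ B ∈ adjS n,
                (∀ C ∈ adjS n, ∑ k, dH (ω k) B ≤ ∑ k, dH (ω k) C) →
                  ∀ q ∈ pairs n, (B q.1 q.2 = true ↔ 1 / 2 < p q.1 q.2)),
          ∏ k, erPr p (ω k) := by
  intro δ hδ
  obtain ⟨hδ0, hδ1⟩ := hδ
  set c : ℝ := ∑ t : {q : Fin n × Fin n // q ∈ pairs n},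
    1 / (4 * (p t.1.1 t.1.2 - 1/2)^2) with hc
  have hc0 : 0 ≤ c := Finset.sum_nonneg fun t _ => by positivity
  refine ⟨max 1 (Nat.ceil (c / δ)), fun N hN => ?_⟩
  have hN1 : 1 ≤ N := le_trans (le_max_left _ _) hN
  have hNpos : (0:ℝ) < N := by exact_mod_cast hN1
  -- step 1: good ⊆ event
  have hsub : Finset.univ.filter
        (fun ω : Fin N → Matrix (Fin n) (Fin n) Bool => allAdj ω ∧ Pgood p N (col ω))
      ⊆ (Finset.univ : Finset (Fin N → Matrix (Fin n) (Fin n) Bool)).filter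
          (fun ω => (∀ k, ω k ∈ adjS n) ∧
            ∀ B ∈ adjS n,
              (∀ C ∈ adjS n, ∑ k, dH (ω k) B ≤ ∑ k, dH (ω k) C) →
                ∀ q ∈ pairs n, (B q.1 q.2 = true ↔ 1 / 2 < p q.1 q.2)) := by
    intro ω hω
    rw [Finset.mem_filter] at *
    obtain ⟨_, hadj, hgood⟩ := hω
    refine ⟨Finset.mem_univ _, hadj, ?_⟩
    exact main_comb p ω hadj (fun q hq => hgood ⟨q, hq⟩)
  have h1 : ∑ ω ∈ Finset.univ.filter
        (fun ω : Fin N → Matrix (Fin n) (Fin n) Bool => allAdj ω ∧ Pgood p N (col ω)),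
        ∏ k, erPr p (ω k)
      ≤ ∑ ω ∈ (Finset.univ : Finset (Fin N → Matrix (Fin n) (Fin n) Bool)).filter
          (fun ω => (∀ k, ω k ∈ adjS n) ∧
            ∀ B ∈ adjS n,
              (∀ C ∈ adjS n, ∑ k, dH (ω k) B ≤ ∑ k, dH (ω k) C) →
                ∀ q ∈ pairs n, (B q.1 q.2 = true ↔ 1 / 2 < p q.1 q.2)),
          ∏ k, erPr p (ω k) :=
    Finset.sum_le_sum_of_subset_of_nonneg hsub
      (fun ω _ _ => Finset.prod_nonneg fun k _ => erPr_nonneg p hp (ω k))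
  -- step 2: transfer to column space
  have h2 : ∑ ω ∈ Finset.univ.filter
        (fun ω : Fin N → Matrix (Fin n) (Fin n) Bool => allAdj ω ∧ Pgood p N (col ω)),
        ∏ k, erPr p (ω k)
      = ∑ y ∈ Finset.univ.filter (Pgood p N),
          ∏ t : {q : Fin n × Fin n // q ∈ pairs n}, mu (p t.1.1 t.1.2) (y t) :=
    transfer p (fun ω => Pgood p N (col ω)) (Pgood p N) (fun ω _ => Iff.rfl)
  -- step 3: total mass is 1
  have htot : ∑ y : {q : Fin n × Fin n // q ∈ pairs n} → Fin N → Bool,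
      ∏ t : {q : Fin n × Fin n // q ∈ pairs n}, mu (p t.1.1 t.1.2) (y t) = 1 := by
    rw [← Fintype.prod_sum
      (fun (t : {q : Fin n × Fin n // q ∈ pairs n}) (x : Fin N → Bool) => mu (p t.1.1 t.1.2) x)]
    simp [sum_mu]
  have hsplit : ∑ y ∈ Finset.univ.filter (Pgood p N),
        ∏ t : {q : Fin n × Fin n // q ∈ pairs n}, mu (p t.1.1 t.1.2) (y t)
      + ∑ y ∈ Finset.univ.filter (fun y => ¬ Pgood p N y),
          ∏ t : {q : Fin n × Fin n // q ∈ pairs n}, mu (p t.1.1 t.1.2) (y t) = 1 := by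
    rw [Finset.sum_filter_add_sum_filter_not, htot]
  -- step 4: union bound for the bad event
  have hmunonneg : ∀ y : {q : Fin n × Fin n // q ∈ pairs n} → Fin N → Bool,
      0 ≤ ∏ t : {q : Fin n × Fin n // q ∈ pairs n}, mu (p t.1.1 t.1.2) (y t) :=
    fun y => Finset.prod_nonneg fun t _ =>
      mu_nonneg (hp t.1.1 t.1.2).1 (hp t.1.1 t.1.2).2 (y t)
  have hbadset : Finset.univ.filter
        (fun y : {q : Fin n × Fin n // q ∈ pairs n} → Fin N → Bool => ¬ Pgood p N y)
      = Finset.univ.filter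
          (fun y => ∃ t : {q : Fin n × Fin n // q ∈ pairs n},
            badcolP N (p t.1.1 t.1.2) (y t)) := by
    apply Finset.filter_congr
    intro y _
    simp [Pgood, badcolP, not_forall]
  have h4 : ∑ y ∈ Finset.univ.filter
        (fun y : {q : Fin n × Fin n // q ∈ pairs n} → Fin N → Bool => ¬ Pgood p N y),
        ∏ t : {q : Fin n × Fin n // q ∈ pairs n}, mu (p t.1.1 t.1.2) (y t)
      ≤ ∑ t₀ : {q : Fin n × Fin n // q ∈ pairs n}, ∑ y ∈ Finset.univ.filter
          (fun y : {q : Fin n × Fin n // q ∈ pairs n} → Fin N → Bool =>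
            badcolP N (p t₀.1.1 t₀.1.2) (y t₀)),
          ∏ t : {q : Fin n × Fin n // q ∈ pairs n}, mu (p t.1.1 t.1.2) (y t) := by
    rw [hbadset]
    exact union_bound _ hmunonneg _
  -- step 5: marginalize and apply the Chebyshev bound
  have h5 : ∀ t₀ : {q : Fin n × Fin n // q ∈ pairs n}, ∑ y ∈ Finset.univ.filter
        (fun y : {q : Fin n × Fin n // q ∈ pairs n} → Fin N → Bool =>
          badcolP N (p t₀.1.1 t₀.1.2) (y t₀)),
        ∏ t : {q : Fin n × Fin n // q ∈ pairs n}, mu (p t.1.1 t.1.2) (y t)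
      ≤ 1 / (4 * (p t₀.1.1 t₀.1.2 - 1/2)^2) / N := by
    intro t₀
    rw [marg (fun (t : {q : Fin n × Fin n // q ∈ pairs n}) (x : Fin N → Bool) =>
      mu (p t.1.1 t.1.2) x) (fun t => sum_mu N _) t₀ (badcolP N (p t₀.1.1 t₀.1.2))]
    refine (badcol_bound hN1 (hp t₀.1.1 t₀.1.2).1 (hp t₀.1.1 t₀.1.2).2
      (hhalf t₀.1 t₀.2)).trans ?_
    have hd : p t₀.1.1 t₀.1.2 - 1/2 ≠ 0 := sub_ne_zero.mpr (hhalf t₀.1 t₀.2)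
    rw [div_div]
    rw [div_le_div_iff₀ (by positivity) (by positivity)]
    ring_nf
    nlinarith [sq_nonneg (p t₀.1.1 t₀.1.2 - 1/2)]
  have h6 : ∑ y ∈ Finset.univ.filter
        (fun y : {q : Fin n × Fin n // q ∈ pairs n} → Fin N → Bool => ¬ Pgood p N y),
        ∏ t : {q : Fin n × Fin n // q ∈ pairs n}, mu (p t.1.1 t.1.2) (y t)
      ≤ c / N := by
    refine h4.trans ?_
    rw [hc, Finset.sum_div]
    exact Finset.sum_le_sum fun t₀ _ => h5 t₀
  -- step 6: numeric bound
  have h7 : c / N ≤ δ := by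
    rw [div_le_iff₀ hNpos]
    have hce : (c / δ : ℝ) ≤ (Nat.ceil (c / δ) : ℝ) := Nat.le_ceil _
    have hNge : (Nat.ceil (c / δ) : ℝ) ≤ N := by
      exact_mod_cast le_trans (le_max_right 1 _) hN
    have : c / δ ≤ (N:ℝ) := le_trans hce hNge
    rw [div_le_iff₀ hδ0] at this
    linarith
  linarith
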